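/- Let N be a finite set of non-monitors with σ = |N| and P a family of paths. Then S ⊆ N is σ-identifiable if and only if every v ∈ S lies on a path p ∈ P with p ∩ N = {v} (i.e., v is the only non-monitor on p). -/
import Mathlib


variable {V : Type*} [DecidableEq V]

/-- A set `S` of non-monitors is `k`-identifiable: any two failure sets of size at most `k`
that differ within `S` are distinguished by the failure state of some path. -/
def kIdent (N : Finset V) (P : Set (Finset V)) (S : Finset V) (k : ℕ) : Prop :=
  ∀ F₁ F₂ : Finset V, F₁ ⊆ N → F₂ ⊆ N → F₁.card ≤ k → F₂.card ≤ k →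
    F₁ ∩ S ≠ F₂ ∩ S → ∃ p ∈ P, Xor' (p ∩ F₁ = ∅) (p ∩ F₂ = ∅)

private lemma key_aux {N S : Finset V} {P : Set (Finset V)}
    (h : ∀ v ∈ S, ∃ p ∈ P, v ∈ p ∧ p ∩ N = {v})
    {F₁ F₂ : Finset V} (h₂ : F₂ ⊆ N) {v : V} (hvS : v ∈ S) (hv₁ : v ∈ F₁) (hv₂ : v ∉ F₂) :
    ∃ p ∈ P, Xor' (p ∩ F₁ = ∅) (p ∩ F₂ = ∅) := by
  obtain ⟨p, hpP, hvp, hpN⟩ := h v hvS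
  refine ⟨p, hpP, Or.inr ⟨?_, ?_⟩⟩
  · apply Finset.eq_empty_of_forall_notMem
    intro x hx
    rw [Finset.mem_inter] at hx
    have : x ∈ p ∩ N := Finset.mem_inter.mpr ⟨hx.1, h₂ hx.2⟩
    rw [hpN, Finset.mem_singleton] at this
    exact hv₂ (this ▸ hx.2)
  · intro he
    have : v ∈ p ∩ F₁ := Finset.mem_inter.mpr ⟨hvp, hv₁⟩
    simp [he] at this

theorem sigma_identifiable_iff (N S : Finset V) (P : Set (Finset V)) (hS : S ⊆ N) :
    kIdent N P S N.card ↔ ∀ v ∈ S, ∃ p ∈ P, v ∈ p ∧ p ∩ N = {v} := by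
  constructor
  · intro hk v hv
    have hne : (N \ {v}) ∩ S ≠ N ∩ S := by
      intro h
      have : v ∈ N ∩ S := Finset.mem_inter.mpr ⟨hS hv, hv⟩
      rw [← h, Finset.mem_inter, Finset.mem_sdiff] at this
      exact this.1.2 (Finset.mem_singleton_self v)
    obtain ⟨p, hpP, hx⟩ := hk (N \ {v}) N Finset.sdiff_subset (le_refl _)
      (Finset.card_le_card Finset.sdiff_subset) (le_refl _) hne
    rcases hx with ⟨h1, h2⟩ | ⟨h2, h1⟩
    · refine ⟨p, hpP, ?_⟩
      have hpN : p ∩ N ≠ ∅ := h2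
      obtain ⟨w, hw⟩ := Finset.nonempty_iff_ne_empty.mpr hpN
      rw [Finset.mem_inter] at hw
      have hwv : w = v := by
        by_contra hne'
        have : w ∈ p ∩ (N \ {v}) := by
          rw [Finset.mem_inter, Finset.mem_sdiff, Finset.mem_singleton]
          exact ⟨hw.1, hw.2, hne'⟩
        simp [h1] at this
      rw [hwv] at hw
      refine ⟨hw.1, ?_⟩
      apply Finset.Subset.antisymm
      · intro x hx
        rw [Finset.mem_inter] at hx
        rw [Finset.mem_singleton]
        by_contra hne'
        have : x ∈ p ∩ (N \ {v}) := by
          rw [Finset.mem_inter, Finset.mem_sdiff, Finset.mem_singleton]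
          exact ⟨hx.1, hx.2, hne'⟩
        simp [h1] at this
      · intro x hx
        rw [Finset.mem_singleton] at hx
        subst hx
        exact Finset.mem_inter.mpr ⟨hw.1, hw.2⟩
    · exact absurd (Finset.eq_empty_of_forall_notMem fun x hx => by
        rw [Finset.mem_inter] at hx
        have : x ∈ p ∩ N := Finset.mem_inter.mpr
          ⟨hx.1, (Finset.mem_sdiff.mp hx.2).1⟩
        simp [h2] at this) h1
  · intro h F₁ F₂ h₁ h₂ _ _ hne
    rw [Ne, Finset.ext_iff, not_forall] at hne
    obtain ⟨v, hv⟩ := hne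
    rw [not_iff, Finset.mem_inter, Finset.mem_inter] at hv
    by_cases hv₁ : v ∈ F₁ ∧ v ∈ S
    · have hv₂ : v ∉ F₂ := fun hc => (hv.mpr ⟨hc, hv₁.2⟩) hv₁
      exact key_aux h h₂ hv₁.2 hv₁.1 hv₂
    · have hv₂ : v ∈ F₂ ∧ v ∈ S := by tauto
      have hv₁' : v ∉ F₁ := fun hc => hv₁ ⟨hc, hv₂.2⟩
      obtain ⟨p, hpP, hx⟩ := key_aux h h₁ hv₂.2 hv₂.1 hv₁'
      exact ⟨p, hpP, hx.symm⟩
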